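/- Let (X,d,A) be a metric pair and p ∈ [1,∞]. Then W_p[d] = W_p[d_p] on D(X,A), where d_p(x,x') := min(d(x,x'), ‖(d(x,A), d(x',A))‖_p) is the p-strengthening of d with respect to A. Moreover, for the canonical map ι: X → D(X,A), W_p[d](ι(x), ι(y)) = d_p(x,y) for all x,y ∈ X. -/

import Mathlib

open scoped ENNReal
open Finsupp

/-- The `ℓᵖ` norm of a finite multiset of values in `[0,∞]`, for `p ∈ [1,∞]`. -/
noncomputable def lpNorm (p : ℝ≥0∞) (s : Multiset ℝ≥0∞) : ℝ≥0∞ :=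
  if p = ∞ then s.sup else (s.map (fun x => x ^ p.toReal)).sum ^ (1 / p.toReal)

/-- The `ℓᵖ` norm of a pair of values in `[0,∞]`. -/
noncomputable def lpPair (p : ℝ≥0∞) (a b : ℝ≥0∞) : ℝ≥0∞ := lpNorm p {a, b}

/-- A formal sum is supported in `A`. -/
def SuppIn {X : Type*} (A : Set X) (α : X →₀ ℕ) : Prop := ↑α.support ⊆ A

/-- Equality modulo `D(A)`: `α = β (mod D(A))`. -/
def DRel {X : Type*} (A : Set X) (α β : X →₀ ℕ) : Prop :=
  ∃ a b : X →₀ ℕ, SuppIn A a ∧ SuppIn A b ∧ α + a = β + b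

/-- `σ ∈ D(X × X)` is a matching between `α` and `β` (mod `D(A)`). -/
noncomputable def IsMatching {X : Type*} (A : Set X) (σ : X × X →₀ ℕ) (α β : X →₀ ℕ) : Prop :=
  DRel A (Finsupp.mapDomain Prod.fst σ) α ∧ DRel A (Finsupp.mapDomain Prod.snd σ) β

/-- The `p`-cost of a matching `σ` with respect to `d`. -/
noncomputable def matchCost {X : Type*} (d : X → X → ℝ≥0∞) (p : ℝ≥0∞) (σ : X × X →₀ ℕ) : ℝ≥0∞ :=
  lpNorm p (σ.toMultiset.map (fun z => d z.1 z.2))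

/-- The `p`-Wasserstein distance between persistence diagrams on `(X, d, A)`,
computed on representatives in the free commutative monoid `D(X) = (X →₀ ℕ)`. -/
noncomputable def Wp {X : Type*} (d : X → X → ℝ≥0∞) (A : Set X) (p : ℝ≥0∞)
    (α β : X →₀ ℕ) : ℝ≥0∞ :=
  ⨅ σ : {σ : X × X →₀ ℕ // IsMatching A σ α β}, matchCost d p σ.1

/-- Distance from a point to the subset `A` (infimum of distances, `∞` if `A = ∅`). -/
noncomputable def distToSet {X : Type*} (d : X → X → ℝ≥0∞) (A : Set X) (x : X) : ℝ≥0∞ :=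
  ⨅ a ∈ A, d x a

/-- The `p`-strengthening of `d` with respect to `A`:
`d_p(x,x') = min(d(x,x'), ‖(d(x,A), d(x',A))‖_p)`. -/
noncomputable def pStrengthening {X : Type*} (d : X → X → ℝ≥0∞) (A : Set X) (p : ℝ≥0∞)
    (x x' : X) : ℝ≥0∞ :=
  min (d x x') (lpPair p (distToSet d A x) (distToSet d A x'))

section Aux

open Multiset ENNReal

variable {X : Type*} {A : Set X} {p : ℝ≥0∞} {d : X → X → ℝ≥0∞}

private lemma toReal_pos' (hp : 1 ≤ p) (hne : p ≠ ∞) : 0 < p.toReal :=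
  ENNReal.toReal_pos (one_pos.trans_le hp).ne' hne

private lemma one_le_toReal' (hp : 1 ≤ p) (hne : p ≠ ∞) : 1 ≤ p.toReal := by
  rw [← ENNReal.toReal_one]
  exact ENNReal.toReal_mono hne hp

lemma lpNorm_top (s : Multiset ℝ≥0∞) : lpNorm ∞ s = s.sup := if_pos rfl

lemma lpNorm_ne_top (hne : p ≠ ∞) (s : Multiset ℝ≥0∞) :
    lpNorm p s = (s.map (fun x => x ^ p.toReal)).sum ^ (1 / p.toReal) := if_neg hne

lemma lpNorm_singleton (hp : 1 ≤ p) (a : ℝ≥0∞) : lpNorm p {a} = a := by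
  by_cases hne : p = ∞
  · subst hne; simp [lpNorm_top]
  · rw [lpNorm_ne_top hne, Multiset.map_singleton, Multiset.sum_singleton, one_div,
      ENNReal.rpow_rpow_inv (toReal_pos' hp hne).ne']

private lemma le_msum {a : ℝ≥0∞} {s : Multiset ℝ≥0∞} (h : a ∈ s) : a ≤ s.sum := by
  obtain ⟨t, rfl⟩ := Multiset.exists_cons_of_mem h
  rw [Multiset.sum_cons]; exact le_self_add

private lemma msum_mono {s t : Multiset ℝ≥0∞} (h : s ≤ t) : s.sum ≤ t.sum := by
  obtain ⟨u, rfl⟩ := Multiset.le_iff_exists_add.mp h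
  rw [Multiset.sum_add]; exact le_self_add

lemma le_lpNorm (hp : 1 ≤ p) {s : Multiset ℝ≥0∞} {a : ℝ≥0∞} (h : a ∈ s) : a ≤ lpNorm p s := by
  by_cases hne : p = ∞
  · subst hne; rw [lpNorm_top]; exact Multiset.le_sup h
  · rw [lpNorm_ne_top hne]
    have h1 : a ^ p.toReal ≤ (s.map (fun x => x ^ p.toReal)).sum :=
      le_msum (Multiset.mem_map_of_mem _ h)
    calc a = (a ^ p.toReal) ^ (1 / p.toReal) := by
            rw [one_div, ENNReal.rpow_rpow_inv (toReal_pos' hp hne).ne']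
      _ ≤ _ := ENNReal.rpow_le_rpow h1 (by positivity)

lemma lpNorm_mono (hp : 1 ≤ p) {s s' : Multiset ℝ≥0∞} (h : s ≤ s') :
    lpNorm p s ≤ lpNorm p s' := by
  by_cases hne : p = ∞
  · subst hne; rw [lpNorm_top, lpNorm_top]
    exact Multiset.sup_le.mpr fun b hb => Multiset.le_sup (Multiset.mem_of_le h hb)
  · rw [lpNorm_ne_top hne, lpNorm_ne_top hne]
    exact ENNReal.rpow_le_rpow (msum_mono (Multiset.map_le_map h)) (by positivity)

lemma lpPair_top (a b : ℝ≥0∞) : lpPair ∞ a b = max a b := by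
  simp [lpPair, lpNorm_top]

lemma lpPair_ne_top (hne : p ≠ ∞) (a b : ℝ≥0∞) :
    lpPair p a b = (a ^ p.toReal + b ^ p.toReal) ^ (1 / p.toReal) := by
  rw [lpPair, lpNorm_ne_top hne]
  simp

lemma lpPair_pow (hp : 1 ≤ p) (hne : p ≠ ∞) (a b : ℝ≥0∞) :
    lpPair p a b ^ p.toReal = a ^ p.toReal + b ^ p.toReal := by
  rw [lpPair_ne_top hne, one_div, ENNReal.rpow_inv_rpow (toReal_pos' hp hne).ne']

lemma lpPair_comm (a b : ℝ≥0∞) : lpPair p a b = lpPair p b a := by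
  rw [lpPair, lpPair, Multiset.pair_comm]

lemma lpPair_zero_left (hp : 1 ≤ p) (b : ℝ≥0∞) : lpPair p 0 b = b := by
  by_cases hne : p = ∞
  · subst hne; simp [lpPair_top]
  · rw [lpPair_ne_top hne, ENNReal.zero_rpow_of_pos (toReal_pos' hp hne), zero_add, one_div,
      ENNReal.rpow_rpow_inv (toReal_pos' hp hne).ne']

lemma lpPair_mono (hp : 1 ≤ p) {a a' b b' : ℝ≥0∞} (ha : a ≤ a') (hb : b ≤ b') :
    lpPair p a b ≤ lpPair p a' b' := by
  by_cases hne : p = ∞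
  · subst hne; rw [lpPair_top, lpPair_top]; exact max_le_max ha hb
  · rw [lpPair_ne_top hne, lpPair_ne_top hne]
    exact ENNReal.rpow_le_rpow
      (add_le_add (ENNReal.rpow_le_rpow ha (toReal_pos' hp hne).le)
        (ENNReal.rpow_le_rpow hb (toReal_pos' hp hne).le)) (by positivity)

lemma distToSet_eq_zero (hrefl : ∀ x, d x x = 0) {x : X} (hx : x ∈ A) :
    distToSet d A x = 0 :=
  le_antisymm ((iInf₂_le x hx).trans_eq (hrefl x)) (by simp)

private lemma rpow_iInf' {ι : Sort*} (f : ι → ℝ≥0∞) {t : ℝ} (ht : 0 < t) :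
    (⨅ i, f i) ^ t = ⨅ i, f i ^ t := by
  have h := OrderIso.map_iInf (ENNReal.orderIsoRpow t ht) f
  simp only [ENNReal.orderIsoRpow_apply] at h
  exact h

lemma distToSet_pow {u : X} {t : ℝ} (ht : 0 < t) :
    distToSet d A u ^ t = ⨅ a ∈ A, d u a ^ t := by
  rw [distToSet, rpow_iInf' _ ht]
  exact iInf_congr fun a => rpow_iInf' _ ht

private lemma exists_lt_of_biInf_lt {f : X → ℝ≥0∞} {c : ℝ≥0∞} (h : (⨅ a ∈ A, f a) < c) :
    ∃ a ∈ A, f a < c := by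
  obtain ⟨a, ha⟩ := iInf_lt_iff.mp h
  obtain ⟨haA, h2⟩ := iInf_lt_iff.mp ha
  exact ⟨a, haA, h2⟩

/-! ### `DRel` lemmas -/

lemma SuppIn.zero : SuppIn A (0 : X →₀ ℕ) := by simp [SuppIn]

lemma SuppIn.add {a b : X →₀ ℕ} (ha : SuppIn A a) (hb : SuppIn A b) : SuppIn A (a + b) := by
  classical
  intro x hx
  rcases Finset.mem_union.mp (Finsupp.support_add hx) with h | h
  exacts [ha h, hb h]

lemma DRel.refl (γ : X →₀ ℕ) : DRel A γ γ := ⟨0, 0, SuppIn.zero, SuppIn.zero, rfl⟩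

lemma DRel.trans {α β γ : X →₀ ℕ} (h1 : DRel A α β) (h2 : DRel A β γ) : DRel A α γ := by
  obtain ⟨a, b, ha, hb, hab⟩ := h1
  obtain ⟨c, e, hc, he, hce⟩ := h2
  refine ⟨a + c, e + b, ha.add hc, he.add hb, ?_⟩
  calc α + (a + c) = α + a + c := by rw [add_assoc]
    _ = β + b + c := by rw [hab]
    _ = β + c + b := by rw [add_right_comm]
    _ = γ + e + b := by rw [hce]
    _ = γ + (e + b) := by rw [add_assoc]

lemma DRel.apply_eq {γ δ : X →₀ ℕ} (h : DRel A γ δ) {u : X} (hu : u ∉ A) : γ u = δ u := by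
  obtain ⟨a, b, ha, hb, hab⟩ := h
  have ha0 : a u = 0 := Finsupp.notMem_support_iff.mp fun hc => hu (ha hc)
  have hb0 : b u = 0 := Finsupp.notMem_support_iff.mp fun hc => hu (hb hc)
  have h2 : γ u + a u = δ u + b u := by
    rw [← Finsupp.add_apply, ← Finsupp.add_apply, hab]
  omega

/-! ### multiset version of `DRel` -/

/-- Multiset version of `DRel`. -/
def DRelM (A : Set X) (m₁ m₂ : Multiset X) : Prop :=
  ∃ a b : Multiset X, (∀ x ∈ a, x ∈ A) ∧ (∀ x ∈ b, x ∈ A) ∧ m₁ + a = m₂ + b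

lemma DRelM.refl (m : Multiset X) : DRelM A m m := ⟨0, 0, by simp, by simp, rfl⟩

lemma DRelM.add {m₁ m₂ n₁ n₂ : Multiset X} (h : DRelM A m₁ m₂) (h' : DRelM A n₁ n₂) :
    DRelM A (m₁ + n₁) (m₂ + n₂) := by
  obtain ⟨a, b, ha, hb, hab⟩ := h
  obtain ⟨c, e, hc, he, hce⟩ := h'
  refine ⟨a + c, b + e, ?_, ?_, ?_⟩
  · intro x hx; rcases Multiset.mem_add.mp hx with h | h; exacts [ha _ h, hc _ h]
  · intro x hx; rcases Multiset.mem_add.mp hx with h | h; exacts [hb _ h, he _ h]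
  · calc m₁ + n₁ + (a + c) = (m₁ + a) + (n₁ + c) := by abel
      _ = (m₂ + b) + (n₂ + e) := by rw [hab, hce]
      _ = m₂ + n₂ + (b + e) := by abel

lemma DRelM.pad {m c : Multiset X} (hc : ∀ x ∈ c, x ∈ A) : DRelM A (m + c) m :=
  ⟨0, c, by simp, hc, by rw [add_zero]⟩

lemma suppIn_iff {a : X →₀ ℕ} : SuppIn A a ↔ ∀ x ∈ a.toMultiset, x ∈ A := by
  simp [SuppIn, Set.subset_def, Finsupp.mem_toMultiset]

private lemma toMultiset_inj {f g : X →₀ ℕ} (h : f.toMultiset = g.toMultiset) : f = g := by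
  classical
  have h2 := congrArg Multiset.toFinsupp h
  rwa [Finsupp.toMultiset_toFinsupp, Finsupp.toMultiset_toFinsupp] at h2

lemma drel_iff {γ δ : X →₀ ℕ} : DRel A γ δ ↔ DRelM A γ.toMultiset δ.toMultiset := by
  classical
  constructor
  · rintro ⟨a, b, ha, hb, h⟩
    exact ⟨a.toMultiset, b.toMultiset, suppIn_iff.mp ha, suppIn_iff.mp hb, by
      rw [← Finsupp.toMultiset_add, ← Finsupp.toMultiset_add, h]⟩
  · rintro ⟨a, b, ha, hb, h⟩
    refine ⟨a.toFinsupp, b.toFinsupp, ?_, ?_, toMultiset_inj ?_⟩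
    · rw [suppIn_iff]; simpa [Multiset.toFinsupp_toMultiset] using ha
    · rw [suppIn_iff]; simpa [Multiset.toFinsupp_toMultiset] using hb
    · rw [Finsupp.toMultiset_add, Finsupp.toMultiset_add, Multiset.toFinsupp_toMultiset,
        Multiset.toFinsupp_toMultiset, h]

/-! ### powered cost -/

/-- The "powered" cost of a multiset of pairs: `sup` for `p = ∞`, the `p`-th power sum
otherwise. -/
noncomputable def pcost (p : ℝ≥0∞) (d : X → X → ℝ≥0∞) (m : Multiset (X × X)) : ℝ≥0∞ :=
  if p = ∞ then (m.map fun z => d z.1 z.2).sup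
  else (m.map fun z => d z.1 z.2 ^ p.toReal).sum

/-- The "powered" per-pair cost. -/
noncomputable def ppair (p : ℝ≥0∞) (d : X → X → ℝ≥0∞) (z : X × X) : ℝ≥0∞ :=
  if p = ∞ then d z.1 z.2 else d z.1 z.2 ^ p.toReal

lemma pcost_zero : pcost p d 0 = 0 := by
  by_cases h : p = ∞ <;> simp [pcost, h]

lemma pcost_singleton (z : X × X) : pcost p d {z} = ppair p d z := by
  by_cases h : p = ∞ <;> simp [pcost, ppair, h]

lemma pcost_add (m₁ m₂ : Multiset (X × X)) :
    pcost p d (m₁ + m₂) =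
      if p = ∞ then max (pcost p d m₁) (pcost p d m₂) else pcost p d m₁ + pcost p d m₂ := by
  by_cases h : p = ∞ <;>
    simp [pcost, h, Multiset.map_add, Multiset.sup_add, Multiset.sum_add, max_def]

lemma pcost_cons (z : X × X) (m : Multiset (X × X)) :
    pcost p d (z ::ₘ m) =
      if p = ∞ then max (ppair p d z) (pcost p d m) else ppair p d z + pcost p d m := by
  rw [← Multiset.singleton_add, pcost_add, pcost_singleton]

lemma pcost_pair (z w : X × X) :
    pcost p d {z, w} =
      if p = ∞ then max (ppair p d z) (ppair p d w) else ppair p d z + ppair p d w := by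
  rw [show ({z, w} : Multiset (X × X)) = z ::ₘ {w} from rfl, pcost_cons, pcost_singleton]

private lemma op_le {a a' b b' δ₁ δ₂ : ℝ≥0∞} (h1 : a' ≤ a + δ₁) (h2 : b' ≤ b + δ₂) :
    (if p = ∞ then max a' b' else a' + b') ≤
      (if p = ∞ then max a b else a + b) + (δ₁ + δ₂) := by
  split_ifs
  · refine max_le (h1.trans ?_) (h2.trans ?_)
    · exact add_le_add (le_max_left _ _) le_self_add
    · exact add_le_add (le_max_right _ _) le_add_self
  · calc a' + b' ≤ (a + δ₁) + (b + δ₂) := add_le_add h1 h2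
      _ = a + b + (δ₁ + δ₂) := by ring

lemma matchCost_eq_pcost_top (σ : X × X →₀ ℕ) :
    matchCost d ∞ σ = pcost ∞ d σ.toMultiset := by
  simp [matchCost, lpNorm_top, pcost]

lemma matchCost_eq_pcost (hne : p ≠ ∞) (σ : X × X →₀ ℕ) :
    matchCost d p σ = pcost p d σ.toMultiset ^ (1 / p.toReal) := by
  rw [matchCost, lpNorm_ne_top hne, pcost, if_neg hne, Multiset.map_map]
  rfl

/-! ### the approximation lemma -/

lemma pair_approx (hp : 1 ≤ p) (hsymm : ∀ x y, d x y = d y x) (z : X × X) {δ : ℝ≥0∞}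
    (hδ : δ ≠ 0) :
    ∃ mz : Multiset (X × X), DRelM A (mz.map Prod.fst) {z.1} ∧
      DRelM A (mz.map Prod.snd) {z.2} ∧
      pcost p d mz ≤ ppair p (pStrengthening d A p) z + δ := by
  set dA : X → ℝ≥0∞ := distToSet d A with hdA
  by_cases h : d z.1 z.2 ≤ lpPair p (dA z.1) (dA z.2)
  · refine ⟨{z}, by simpa using DRelM.refl {z.1}, by simpa using DRelM.refl {z.2}, ?_⟩
    have hmin : pStrengthening d A p z.1 z.2 = d z.1 z.2 := min_eq_left h
    rw [pcost_singleton]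
    refine le_trans (le_of_eq ?_) le_self_add
    simp [ppair, hmin]
  · push_neg at h
    have hmin : pStrengthening d A p z.1 z.2 = lpPair p (dA z.1) (dA z.2) :=
      min_eq_right h.le
    have hfin : lpPair p (dA z.1) (dA z.2) ≠ ∞ := h.ne_top
    have hδ2 : δ / 2 ≠ 0 := (ENNReal.half_pos hδ).ne'
    by_cases hne : p = ∞
    · subst hne
      rw [lpPair_top] at hfin hmin
      have hu : dA z.1 ≠ ∞ := fun hc => hfin (by simp [hc])
      have hv : dA z.2 ≠ ∞ := fun hc => hfin (by simp [hc])
      obtain ⟨a, haA, hda⟩ : ∃ a ∈ A, d z.1 a < dA z.1 + δ / 2 :=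
        exists_lt_of_biInf_lt (ENNReal.lt_add_right hu hδ2)
      obtain ⟨b, hbA, hdb⟩ : ∃ b ∈ A, d z.2 b < dA z.2 + δ / 2 :=
        exists_lt_of_biInf_lt (ENNReal.lt_add_right hv hδ2)
      refine ⟨{(z.1, a), (b, z.2)}, ?_, ?_, ?_⟩
      · simpa [Multiset.singleton_add] using
          DRelM.pad (c := {b}) (m := {z.1}) (by simpa using hbA)
      · rw [show ({(z.1, a), (b, z.2)} : Multiset (X × X)).map Prod.snd = {a, z.2} by simp,
          Multiset.pair_comm]
        exact DRelM.pad (c := {a}) (m := {z.2}) (by simpa using haA)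
      · rw [pcost_pair, if_pos rfl]
        simp only [ppair, if_pos rfl, hmin]
        have h1 : d z.1 a ≤ dA z.1 + δ / 2 := hda.le
        have h2 : d b z.2 ≤ dA z.2 + δ / 2 := by rw [hsymm]; exact hdb.le
        calc max (d z.1 a) (d b z.2) ≤ max (dA z.1 + δ / 2) (dA z.2 + δ / 2) :=
              max_le_max h1 h2
          _ = max (dA z.1) (dA z.2) + δ / 2 := (max_add_add_right _ _ _)
          _ ≤ max (dA z.1) (dA z.2) + δ :=
              add_le_add_right (ENNReal.half_le_self) _
    · have ht := toReal_pos' hp hne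
      set t := p.toReal
      have hpow : lpPair p (dA z.1) (dA z.2) ^ t = dA z.1 ^ t + dA z.2 ^ t :=
        lpPair_pow hp hne _ _
      have hfin' : dA z.1 ^ t + dA z.2 ^ t ≠ ∞ := by
        rw [← hpow]; exact ENNReal.rpow_ne_top_of_nonneg ht.le hfin
      have hu : dA z.1 ^ t ≠ ∞ := fun hc => hfin' (by simp [hc])
      have hv : dA z.2 ^ t ≠ ∞ := fun hc => hfin' (by simp [hc])
      obtain ⟨a, haA, hda⟩ : ∃ a ∈ A, d z.1 a ^ t < dA z.1 ^ t + δ / 2 := by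
        refine exists_lt_of_biInf_lt ?_
        rw [← distToSet_pow ht]
        exact ENNReal.lt_add_right hu hδ2
      obtain ⟨b, hbA, hdb⟩ : ∃ b ∈ A, d z.2 b ^ t < dA z.2 ^ t + δ / 2 := by
        refine exists_lt_of_biInf_lt ?_
        rw [← distToSet_pow ht]
        exact ENNReal.lt_add_right hv hδ2
      refine ⟨{(z.1, a), (b, z.2)}, ?_, ?_, ?_⟩
      · simpa [Multiset.singleton_add] using
          DRelM.pad (c := {b}) (m := {z.1}) (by simpa using hbA)
      · rw [show ({(z.1, a), (b, z.2)} : Multiset (X × X)).map Prod.snd = {a, z.2} by simp,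
          Multiset.pair_comm]
        exact DRelM.pad (c := {a}) (m := {z.2}) (by simpa using haA)
      · rw [pcost_pair, if_neg hne]
        simp only [ppair, if_neg hne, hmin]
        have h2 : d b z.2 ^ t ≤ dA z.2 ^ t + δ / 2 := by rw [hsymm]; exact hdb.le
        calc d z.1 a ^ t + d b z.2 ^ t ≤ (dA z.1 ^ t + δ / 2) + (dA z.2 ^ t + δ / 2) :=
              add_le_add hda.le h2
          _ = (dA z.1 ^ t + dA z.2 ^ t) + δ := by
              rw [add_add_add_comm, ENNReal.add_halves]
          _ = lpPair p (dA z.1) (dA z.2) ^ t + δ := by rw [hpow]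

lemma exists_strength_approx (hp : 1 ≤ p) (hsymm : ∀ x y, d x y = d y x)
    (m : Multiset (X × X)) :
    ∀ δ : ℝ≥0∞, δ ≠ 0 → ∃ m' : Multiset (X × X),
      DRelM A (m'.map Prod.fst) (m.map Prod.fst) ∧
      DRelM A (m'.map Prod.snd) (m.map Prod.snd) ∧
      pcost p d m' ≤ pcost p (pStrengthening d A p) m + δ := by
  induction m using Multiset.induction with
  | empty =>
    intro δ hδ
    exact ⟨0, DRelM.refl _, DRelM.refl _, by simp [pcost_zero]⟩
  | cons z m ih =>
    intro δ hδ
    have hδ2 : δ / 2 ≠ 0 := (ENNReal.half_pos hδ).ne'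
    obtain ⟨m₁, h1, h2, h3⟩ := ih (δ / 2) hδ2
    obtain ⟨mz, g1, g2, g3⟩ := pair_approx hp hsymm z hδ2
    refine ⟨mz + m₁, ?_, ?_, ?_⟩
    · rw [Multiset.map_add, Multiset.map_cons, ← Multiset.singleton_add]
      exact g1.add h1
    · rw [Multiset.map_add, Multiset.map_cons, ← Multiset.singleton_add]
      exact g2.add h2
    · rw [pcost_add, pcost_cons]
      calc (if p = ∞ then max (pcost p d mz) (pcost p d m₁) else pcost p d mz + pcost p d m₁)
          ≤ (if p = ∞ then max (ppair p (pStrengthening d A p) z)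
              (pcost p (pStrengthening d A p) m) else
              ppair p (pStrengthening d A p) z + pcost p (pStrengthening d A p) m)
            + (δ / 2 + δ / 2) := op_le g3 h3
        _ = _ := by rw [ENNReal.add_halves]

/-! ### the key upper bound -/

lemma wp_le_matchCost (hp : 1 ≤ p) (hsymm : ∀ x y, d x y = d y x) {α β : X →₀ ℕ}
    {σ : X × X →₀ ℕ} (hσ : IsMatching A σ α β) :
    Wp d A p α β ≤ matchCost (pStrengthening d A p) p σ := by
  refine ENNReal.le_of_forall_pos_le_add fun ε hε _ => ?_
  classical
  have hε' : ((ε : ℝ≥0∞)) ≠ 0 := by exact_mod_cast hε.ne'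
  set δ : ℝ≥0∞ := if p = ∞ then (ε : ℝ≥0∞) else (ε : ℝ≥0∞) ^ p.toReal with hδdef
  have hδ : δ ≠ 0 := by
    rw [hδdef]
    split_ifs with h
    · exact hε'
    · exact (ENNReal.rpow_pos (by exact_mod_cast hε) ENNReal.coe_ne_top).ne'
  obtain ⟨m', h1, h2, h3⟩ := exists_strength_approx hp hsymm σ.toMultiset δ hδ
  have hmatch : IsMatching A m'.toFinsupp α β := by
    constructor
    · refine DRel.trans (drel_iff.mpr ?_) hσ.1
      rw [← Finsupp.toMultiset_map, ← Finsupp.toMultiset_map, Multiset.toFinsupp_toMultiset]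
      exact h1
    · refine DRel.trans (drel_iff.mpr ?_) hσ.2
      rw [← Finsupp.toMultiset_map, ← Finsupp.toMultiset_map, Multiset.toFinsupp_toMultiset]
      exact h2
  refine le_trans (iInf_le _ (⟨m'.toFinsupp, hmatch⟩ :
    {σ' : X × X →₀ ℕ // IsMatching A σ' α β})) ?_
  by_cases hne : p = ∞
  · subst hne
    rw [matchCost_eq_pcost_top, matchCost_eq_pcost_top, Multiset.toFinsupp_toMultiset]
    simpa [hδdef] using h3
  · have ht := toReal_pos' hp hne
    rw [matchCost_eq_pcost hne, matchCost_eq_pcost hne, Multiset.toFinsupp_toMultiset]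
    have ht1 : 1 / p.toReal ≤ 1 := by
      rw [div_le_one ht]
      exact one_le_toReal' hp hne
    calc pcost p d m' ^ (1 / p.toReal)
        ≤ (pcost p (pStrengthening d A p) σ.toMultiset + δ) ^ (1 / p.toReal) :=
          ENNReal.rpow_le_rpow h3 (by positivity)
      _ ≤ pcost p (pStrengthening d A p) σ.toMultiset ^ (1 / p.toReal) + δ ^ (1 / p.toReal) :=
          ENNReal.rpow_add_le_add_rpow _ _ (by positivity) ht1
      _ = pcost p (pStrengthening d A p) σ.toMultiset ^ (1 / p.toReal) + ε := by
          rw [hδdef, if_neg hne, one_div, ENNReal.rpow_rpow_inv ht.ne']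

lemma matchCost_mono_left (hp : 1 ≤ p) {d' : X → X → ℝ≥0∞} (h : ∀ x y, d' x y ≤ d x y)
    (σ : X × X →₀ ℕ) : matchCost d' p σ ≤ matchCost d p σ := by
  by_cases hne : p = ∞
  · subst hne
    rw [matchCost, matchCost, lpNorm_top, lpNorm_top]
    refine Multiset.sup_le.mpr fun b hb => ?_
    obtain ⟨z, hz, rfl⟩ := Multiset.mem_map.mp hb
    exact le_trans (h _ _) (Multiset.le_sup (Multiset.mem_map_of_mem _ hz))
  · rw [matchCost, matchCost, lpNorm_ne_top hne, lpNorm_ne_top hne, Multiset.map_map,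
      Multiset.map_map]
    refine ENNReal.rpow_le_rpow ?_ (by positivity)
    induction σ.toMultiset using Multiset.induction with
    | empty => simp
    | cons z M ih =>
      simp only [Multiset.map_cons, Multiset.sum_cons]
      exact add_le_add (ENNReal.rpow_le_rpow (h _ _) (toReal_pos' hp hne).le) ih

/-! ### lower bound for singletons -/

lemma dp_le_matchCost (hp : 1 ≤ p) (hrefl : ∀ x, d x x = 0) (hsymm : ∀ x y, d x y = d y x)
    {x y : X} {σ : X × X →₀ ℕ}
    (hσ : IsMatching A σ (Finsupp.single x 1) (Finsupp.single y 1)) :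
    pStrengthening d A p x y ≤ matchCost d p σ := by
  classical
  obtain ⟨h1, h2⟩ := hσ
  set f : X × X → ℝ≥0∞ := fun z => d z.1 z.2 with hf
  have hcost : matchCost d p σ = lpNorm p (σ.toMultiset.map f) := rfl
  have hfst : ∀ u, u ∉ A →
      Multiset.count u (σ.toMultiset.map Prod.fst) = (Finsupp.single x 1 : X →₀ ℕ) u := by
    intro u hu
    rw [Finsupp.toMultiset_map, Finsupp.count_toMultiset]
    exact h1.apply_eq hu
  have hsnd : ∀ u, u ∉ A →
      Multiset.count u (σ.toMultiset.map Prod.snd) = (Finsupp.single y 1 : X →₀ ℕ) u := by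
    intro u hu
    rw [Finsupp.toMultiset_map, Finsupp.count_toMultiset]
    exact h2.apply_eq hu
  have hmem1 : ∀ z ∈ σ.toMultiset, z.1 = x ∨ z.1 ∈ A := by
    intro z hz
    by_contra hc
    push_neg at hc
    have h0 := hfst z.1 hc.2
    rw [Finsupp.single_apply, if_neg fun h => hc.1 h.symm] at h0
    have hpos : 0 < Multiset.count z.1 (σ.toMultiset.map Prod.fst) :=
      Multiset.count_pos.mpr (Multiset.mem_map_of_mem _ hz)
    omega
  have hmem2 : ∀ z ∈ σ.toMultiset, z.2 = y ∨ z.2 ∈ A := by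
    intro z hz
    by_contra hc
    push_neg at hc
    have h0 := hsnd z.2 hc.2
    rw [Finsupp.single_apply, if_neg fun h => hc.1 h.symm] at h0
    have hpos : 0 < Multiset.count z.2 (σ.toMultiset.map Prod.snd) :=
      Multiset.count_pos.mpr (Multiset.mem_map_of_mem _ hz)
    omega
  have hxy : ∀ z ∈ σ.toMultiset, z.1 = x → z.2 = y →
      pStrengthening d A p x y ≤ matchCost d p σ := by
    intro z hz e1 e2
    refine (min_le_left _ _).trans ?_
    have hfz : f z = d x y := by rw [hf]; simp [e1, e2]
    rw [hcost, ← hfz]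
    exact le_lpNorm hp (Multiset.mem_map_of_mem f hz)
  by_cases hx : x ∈ A
  · by_cases hy : y ∈ A
    · refine (min_le_right _ _).trans ?_
      rw [distToSet_eq_zero hrefl hx, distToSet_eq_zero hrefl hy, lpPair_zero_left hp]
      exact by simp
    · have hcy : Multiset.count y (σ.toMultiset.map Prod.snd) = 1 := by
        rw [hsnd y hy]; simp
      have hmy : y ∈ σ.toMultiset.map Prod.snd := by
        rw [← Multiset.count_pos, hcy]; norm_num
      obtain ⟨w, hw, hw2⟩ := Multiset.mem_map.mp hmy
      have hw1 : w.1 ∈ A := by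
        rcases hmem1 w hw with h | h
        exacts [h ▸ hx, h]
      refine (min_le_right _ _).trans ?_
      rw [distToSet_eq_zero hrefl hx, lpPair_zero_left hp, hcost]
      calc distToSet d A y ≤ d y w.1 := iInf₂_le _ hw1
        _ = f w := by rw [hf, hsymm]; simp [hw2]
        _ ≤ _ := le_lpNorm hp (Multiset.mem_map_of_mem f hw)
  · by_cases hy : y ∈ A
    · have hcx : Multiset.count x (σ.toMultiset.map Prod.fst) = 1 := by
        rw [hfst x hx]; simp
      have hmx : x ∈ σ.toMultiset.map Prod.fst := by
        rw [← Multiset.count_pos, hcx]; norm_num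
      obtain ⟨z, hz, hz1⟩ := Multiset.mem_map.mp hmx
      have hz2 : z.2 ∈ A := by
        rcases hmem2 z hz with h | h
        exacts [h ▸ hy, h]
      refine (min_le_right _ _).trans ?_
      rw [distToSet_eq_zero hrefl hy, lpPair_comm, lpPair_zero_left hp, hcost]
      calc distToSet d A x ≤ d x z.2 := iInf₂_le _ hz2
        _ = f z := by rw [hf]; simp [hz1]
        _ ≤ _ := le_lpNorm hp (Multiset.mem_map_of_mem f hz)
    · have hcx : Multiset.count x (σ.toMultiset.map Prod.fst) = 1 := by
        rw [hfst x hx]; simp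
      have hmx : x ∈ σ.toMultiset.map Prod.fst := by
        rw [← Multiset.count_pos, hcx]; norm_num
      obtain ⟨z, hz, hz1⟩ := Multiset.mem_map.mp hmx
      have hcy : Multiset.count y (σ.toMultiset.map Prod.snd) = 1 := by
        rw [hsnd y hy]; simp
      have hmy : y ∈ σ.toMultiset.map Prod.snd := by
        rw [← Multiset.count_pos, hcy]; norm_num
      obtain ⟨w, hw, hw2⟩ := Multiset.mem_map.mp hmy
      rcases hmem2 z hz with e | hz2
      · exact hxy z hz hz1 e
      rcases hmem1 w hw with e | hw1
      · exact hxy w hw e hw2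
      have hzw : z ≠ w := fun h => hx (hz1 ▸ h ▸ hw1)
      have hle : ({z, w} : Multiset (X × X)) ≤ σ.toMultiset := by
        rw [Multiset.le_iff_count]
        intro c
        by_cases hcz : c = z
        · subst hcz
          rw [show ({c, w} : Multiset (X × X)) = c ::ₘ {w} from rfl,
            Multiset.count_cons_self, Multiset.count_singleton, if_neg hzw]
          simpa using Multiset.one_le_count_iff_mem.mpr hz
        · by_cases hcw : c = w
          · subst hcw
            rw [show ({z, c} : Multiset (X × X)) = z ::ₘ {c} from rfl,
              Multiset.count_cons_of_ne hcz, Multiset.count_singleton, if_pos rfl]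
            exact Multiset.one_le_count_iff_mem.mpr hw
          · rw [show ({z, w} : Multiset (X × X)) = z ::ₘ {w} from rfl,
              Multiset.count_cons_of_ne hcz, Multiset.count_singleton, if_neg hcw]
            exact Nat.zero_le _
      refine (min_le_right _ _).trans ?_
      calc lpPair p (distToSet d A x) (distToSet d A y)
          ≤ lpPair p (d x z.2) (d w.1 y) :=
            lpPair_mono hp (iInf₂_le _ hz2) (by rw [hsymm]; exact iInf₂_le _ hw1)
        _ = lpNorm p (({z, w} : Multiset (X × X)).map f) := by
            rw [show ({z, w} : Multiset (X × X)).map f = {f z, f w} by simp]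
            rw [lpPair, hf]
            simp [hz1, hw2]
        _ ≤ lpNorm p (σ.toMultiset.map f) := lpNorm_mono hp (Multiset.map_le_map hle)

end Aux

/-- `W_p[d] = W_p[d_p]` on `D(X,A)`, where `d_p` is the
`p`-strengthening of `d` with respect to `A`; moreover, for the canonical map
`ι : X → D(X,A)`, `W_p[d](ι x, ι y) = d_p(x,y)`. -/
theorem wasserstein_p_strengthening {X : Type*}
    (d : X → X → ℝ≥0∞)
    (hrefl : ∀ x, d x x = 0)
    (hsymm : ∀ x y, d x y = d y x)
    (htri : ∀ x y z, d x y ≤ d x z + d z y)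
    (A : Set X) (p : ℝ≥0∞) (hp : 1 ≤ p) :
    (∀ α β : X →₀ ℕ, Wp d A p α β = Wp (pStrengthening d A p) A p α β) ∧
    (∀ x y : X,
      Wp d A p (Finsupp.single x 1) (Finsupp.single y 1) = pStrengthening d A p x y) := by
  classical
  have key : ∀ (α β : X →₀ ℕ) (σ : X × X →₀ ℕ), IsMatching A σ α β →
      Wp d A p α β ≤ matchCost (pStrengthening d A p) p σ :=
    fun α β σ hσ => wp_le_matchCost hp hsymm hσ
  have part1 : ∀ α β : X →₀ ℕ, Wp d A p α β = Wp (pStrengthening d A p) A p α β := by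
    intro α β
    refine le_antisymm (le_iInf fun σp => key α β σp.1 σp.2) (le_iInf fun σp => ?_)
    exact le_trans (iInf_le _ σp)
      (matchCost_mono_left hp (fun x y => min_le_left _ _) σp.1)
  refine ⟨part1, fun x y => le_antisymm ?_ (le_iInf fun σp => dp_le_matchCost hp hrefl hsymm σp.2)⟩
  have hm : IsMatching A (Finsupp.single (x, y) 1) (Finsupp.single x 1) (Finsupp.single y 1) := by
    constructor
    · rw [Finsupp.mapDomain_single]
      exact DRel.refl _
    · rw [Finsupp.mapDomain_single]
      exact DRel.refl _
  refine le_trans (key _ _ _ hm) (le_of_eq ?_)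
  rw [matchCost, Finsupp.toMultiset_single, one_nsmul, Multiset.map_singleton]
  exact lpNorm_singleton hp _
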